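/- For k = 1,…,K-1, the eigenvector s_k with nodal part s_{k,j} = sin(πkj/K) and element part s_{k,j-1/2} = p sin(πk(j-1)/K) + p̌ sin(πkj/K) has squared 𝒞-norm ‖s_k‖_𝒞² = K(b_0 + b_n cos(πk/K)), where b_0 = c_0 + (C̃p + 2c)·p and b_n = c_n + (C̃p + 2c)·p̌. -/

import Mathlib

open Matrix Real

/-- The flip (reversal) operator `P`: `(Pp)_l = p_{n-l}`. -/
def flipVec {m : ℕ} (v : Fin m → ℝ) : Fin m → ℝ := fun i => v i.rev

lemma flipVec_dot {m : ℕ} (a b : Fin m → ℝ) : flipVec a ⬝ᵥ b = a ⬝ᵥ flipVec b := by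
  simp only [dotProduct, flipVec]
  exact Fintype.sum_bijective Fin.rev Fin.rev_bijective _ _ (fun i => by simp [Fin.rev_rev])

lemma flipVec_dot_flip {m : ℕ} (a b : Fin m → ℝ) : flipVec a ⬝ᵥ flipVec b = a ⬝ᵥ b := by
  rw [flipVec_dot]
  congr 1
  funext i
  simp [flipVec, Fin.rev_rev]

lemma dot_expand {m : ℕ} (a b a' b' : Fin m → ℝ) (x y x' y' : ℝ) :
    (fun l => a l * x + b l * y) ⬝ᵥ (fun l => a' l * x' + b' l * y') =
      (a ⬝ᵥ a') * (x * x') + (a ⬝ᵥ b') * (x * y') + (b ⬝ᵥ a') * (y * x')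
        + (b ⬝ᵥ b') * (y * y') := by
  simp only [dotProduct]
  rw [show ∀ (s1 s2 s3 s4 : ℝ), s1 + s2 + s3 + s4 = s1 + s2 + (s3 + s4) from
    fun _ _ _ _ => by ring]
  trans ∑ l, (a l * a' l * (x * x') + a l * b' l * (x * y')
    + (b l * a' l * (y * x') + b l * b' l * (y * y')))
  · exact Finset.sum_congr rfl fun l _ => by ring
  · simp only [Finset.sum_add_distrib, ← Finset.sum_mul]

lemma dot_comb {m : ℕ} (a u v : Fin m → ℝ) (x y : ℝ) :
    a ⬝ᵥ (fun l => u l * x + v l * y) = (a ⬝ᵥ u) * x + (a ⬝ᵥ v) * y := by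
  simp only [dotProduct]
  trans ∑ l, (a l * u l * x + a l * v l * y)
  · exact Finset.sum_congr rfl fun l _ => by ring
  · simp only [Finset.sum_add_distrib, ← Finset.sum_mul]

lemma mulVec_comb {m : ℕ} (M : Matrix (Fin m) (Fin m) ℝ) (u v : Fin m → ℝ) (x y : ℝ) :
    M.mulVec (fun l => u l * x + v l * y) = fun i => M.mulVec u i * x + M.mulVec v i * y := by
  funext i
  exact dot_comb (M i) u v x y

lemma fun_add_dot {m : ℕ} (u v w : Fin m → ℝ) :
    (fun l => u l + v l) ⬝ᵥ w = u ⬝ᵥ w + v ⬝ᵥ w := by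
  simp only [dotProduct, add_mul, Finset.sum_add_distrib]

lemma smul_fun_dot {m : ℕ} (a : ℝ) (u w : Fin m → ℝ) :
    (fun l => a * u l) ⬝ᵥ w = a * (u ⬝ᵥ w) := by
  simp only [dotProduct, Finset.mul_sum, mul_assoc]

lemma sum_cos_zero (K k : ℕ) (hK : 1 ≤ K) (hk1 : 1 ≤ k) (hk2 : k < K) (φ : ℝ) :
    ∑ j ∈ Finset.range K, Real.cos (2 * π * k / K * j + φ) = 0 := by
  have hKpos : (0:ℝ) < K := by positivity
  have hkpos : (0:ℝ) < k := by exact_mod_cast hk1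
  have hkK : (k:ℝ) < K := by exact_mod_cast hk2
  set θ : ℝ := 2 * π * k / K with hθ
  have hθpos : 0 < θ := by
    apply div_pos _ hKpos; positivity
  have hθlt : θ < 2 * π := by
    rw [hθ, div_lt_iff₀ hKpos]
    have := Real.pi_pos
    nlinarith
  set z : ℂ := Complex.exp ((θ : ℝ) * Complex.I) with hz
  have hz1 : z ≠ 1 := by
    intro h
    rw [hz, Complex.exp_eq_one_iff] at h
    obtain ⟨m, hm⟩ := h
    have hm' : ((θ : ℝ) : ℂ) = ((2 * π * m : ℝ) : ℂ) := by
      apply mul_right_cancel₀ Complex.I_ne_zero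
      rw [hm]; push_cast; ring
    have hm2 : θ = 2 * π * m := Complex.ofReal_inj.mp hm'
    have hpi := Real.pi_pos
    rcases le_or_gt m 0 with h0 | h0
    · have : (m:ℝ) ≤ 0 := by exact_mod_cast h0
      nlinarith
    · have : (1:ℝ) ≤ m := by exact_mod_cast h0
      nlinarith
  have hzK : z ^ K = 1 := by
    rw [hz, ← Complex.exp_nat_mul]
    have hKC : (K : ℂ) * ((θ:ℝ) * Complex.I) = (k:ℕ) * (2 * π * Complex.I) := by
      rw [hθ]; push_cast
      have : (K:ℂ) ≠ 0 := by exact_mod_cast hKpos.ne'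
      field_simp
    rw [hKC, Complex.exp_nat_mul]
    simp [Complex.exp_two_pi_mul_I]
  have key : ∑ j ∈ Finset.range K, Complex.exp ((θ * j + φ : ℝ) * Complex.I) = 0 := by
    have hterm : ∀ j : ℕ, Complex.exp ((θ * j + φ : ℝ) * Complex.I)
        = Complex.exp ((φ:ℝ) * Complex.I) * z ^ j := by
      intro j
      rw [hz, ← Complex.exp_nat_mul, ← Complex.exp_add]
      congr 1
      push_cast
      ring
    simp_rw [hterm]
    rw [← Finset.mul_sum, geom_sum_eq hz1, hzK]
    simp
  have hre : ∑ j ∈ Finset.range K, Real.cos (θ * j + φ)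
      = (∑ j ∈ Finset.range K, Complex.exp ((θ * j + φ : ℝ) * Complex.I)).re := by
    rw [Complex.re_sum]
    exact Finset.sum_congr rfl fun j _ => (Complex.exp_ofReal_mul_I_re _).symm
  rw [hre, key]
  simp

lemma sum_sin_sq (K k : ℕ) (hK : 1 ≤ K) (hk1 : 1 ≤ k) (hk2 : k < K) :
    ∑ j ∈ Finset.range K, Real.sin (π * k * j / K) ^ 2 = K / 2 := by
  have hKne : (K:ℝ) ≠ 0 := by positivity
  have h1 : ∀ j : ℕ, Real.sin (π * k * j / K) ^ 2
      = 1 / 2 - Real.cos (2 * π * k / K * j + 0) / 2 := by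
    intro j
    rw [Real.sin_sq_eq_half_sub]
    congr 2
    field_simp
    ring
  simp_rw [h1]
  rw [Finset.sum_sub_distrib, ← Finset.sum_div, ← Finset.sum_div,
    sum_cos_zero K k hK hk1 hk2 0]
  simp [mul_comm]

lemma sum_sin_mul (K k : ℕ) (hK : 1 ≤ K) (hk1 : 1 ≤ k) (hk2 : k < K) :
    ∑ j ∈ Finset.range K, Real.sin (π * k * j / K) * Real.sin (π * k * (j+1) / K)
      = K / 2 * Real.cos (π * k / K) := by
  have hKne : (K:ℝ) ≠ 0 := by positivity
  have h1 : ∀ j : ℕ, Real.sin (π * k * j / K) * Real.sin (π * k * (j+1) / K)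
      = Real.cos (π * k / K) / 2 - Real.cos (2 * π * k / K * j + π * k / K) / 2 := by
    intro j
    have e1 : Real.cos (π * k * j / K - π * k * (j+1) / K)
        = Real.cos (π * k * j / K) * Real.cos (π * k * (j+1) / K)
          + Real.sin (π * k * j / K) * Real.sin (π * k * (j+1) / K) := Real.cos_sub _ _
    have e2 : Real.cos (π * k * j / K + π * k * (j+1) / K)
        = Real.cos (π * k * j / K) * Real.cos (π * k * (j+1) / K)
          - Real.sin (π * k * j / K) * Real.sin (π * k * (j+1) / K) := Real.cos_add _ _
    have e3 : Real.cos (π * k * j / K - π * k * (j+1) / K) = Real.cos (π * k / K) := by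
      rw [show π * k * j / K - π * k * (j+1) / K = -(π * k / K) by field_simp; ring,
        Real.cos_neg]
    have e4 : π * k * j / K + π * k * (j+1) / K = 2 * π * k / K * j + π * k / K := by
      field_simp; ring
    rw [e4] at e2
    rw [e3] at e1
    linarith
  simp_rw [h1]
  rw [Finset.sum_sub_distrib, ← Finset.sum_div, ← Finset.sum_div,
    sum_cos_zero K k hK hk1 hk2 (π * k / K)]
  simp [mul_comm]
  ring

lemma nodal_term {m : ℕ} (c0 cn x0 x1 x2 : ℝ) (c p : Fin m → ℝ) :
    (cn * x0 + flipVec c ⬝ᵥ (fun l => p l * x0 + flipVec p l * x1) + 2 * c0 * x1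
      + c ⬝ᵥ (fun l => p l * x1 + flipVec p l * x2) + cn * x2) * x1
    = (cn + c ⬝ᵥ flipVec p) * (x0 * x1) + (2 * c0 + 2 * (c ⬝ᵥ p)) * x1 ^ 2
      + (cn + c ⬝ᵥ flipVec p) * (x1 * x2) := by
  rw [dot_comb, dot_comb, flipVec_dot, flipVec_dot_flip]
  ring

lemma elt_term {m : ℕ} (x0 x1 : ℝ) (c p q : Fin m → ℝ) :
    (fun l => c l * x0 + (q l * x0 + flipVec q l * x1) + flipVec c l * x1)
        ⬝ᵥ (fun l => p l * x0 + flipVec p l * x1)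
    = (c ⬝ᵥ p + q ⬝ᵥ p) * x0 ^ 2 + (c ⬝ᵥ p + q ⬝ᵥ p) * x1 ^ 2
      + (2 * (c ⬝ᵥ flipVec p) + 2 * (q ⬝ᵥ flipVec p)) * (x0 * x1) := by
  have h : (fun l => c l * x0 + (q l * x0 + flipVec q l * x1) + flipVec c l * x1)
      = (fun l => (fun l => c l + q l) l * x0
          + (fun l => flipVec c l + flipVec q l) l * x1) := by
    funext l; ring
  rw [h, dot_expand, fun_add_dot, fun_add_dot, fun_add_dot, fun_add_dot,
    flipVec_dot, flipVec_dot, flipVec_dot_flip, flipVec_dot_flip]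
  ring

/-- The squared `𝒞`-norm of the eigenvector `s_k` with nodal part `sin(πkj/K)` and
element part `p sin(πk(j-1)/K) + p̌ sin(πkj/K)` equals `K(b₀ + bₙ cos(πk/K))`, where
`b₀ = c₀ + (C̃p + 2c)·p` and `bₙ = cₙ + (C̃p + 2c)·p̌`.  The global mass operator `𝒞`
is assembled from the blocks `c₀, cₙ, c, č = Pc, C̃` of the local mass matrix, with
`C̃` commuting with `P`. -/
theorem sine_eigenvector_C_norm (n K k : ℕ) (hn : 2 ≤ n) (hK : 2 ≤ K)
    (hk1 : 1 ≤ k) (hk2 : k ≤ K - 1)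
    (c0 cn : ℝ) (c : Fin (n - 1) → ℝ)
    (Ct : Matrix (Fin (n - 1)) (Fin (n - 1)) ℝ)
    (hsym : ∀ w, Ct.mulVec (flipVec w) = flipVec (Ct.mulVec w))
    (p : Fin (n - 1) → ℝ) :
    let vnode : ℕ → ℝ := fun j => Real.sin (π * k * j / K)
    let velt : ℕ → Fin (n - 1) → ℝ := fun j i =>
      p i * Real.sin (π * k * (j - 1 : ℕ) / K) + flipVec p i * Real.sin (π * k * j / K)
    let b0 : ℝ := c0 + (fun i => Ct.mulVec p i + 2 * c i) ⬝ᵥ p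
    let bn : ℝ := cn + (fun i => Ct.mulVec p i + 2 * c i) ⬝ᵥ flipVec p
    (∑ j ∈ Finset.Icc 1 (K - 1),
        (cn * vnode (j - 1) + flipVec c ⬝ᵥ velt j + 2 * c0 * vnode j
          + c ⬝ᵥ velt (j + 1) + cn * vnode (j + 1)) * vnode j)
      + ∑ j ∈ Finset.Icc 1 K,
          (fun i => c i * vnode (j - 1) + Ct.mulVec (velt j) i + flipVec c i * vnode j)
            ⬝ᵥ velt j
      = K * (b0 + bn * Real.cos (π * k / K)) := by
  intro vnode velt b0 bn
  have hK1 : 1 ≤ K := by omega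
  have hkK : k < K := by omega
  have hKpos : (0:ℝ) < K := by positivity
  have hsK : Real.sin (π * k * (K:ℕ) / K) = 0 := by
    rw [show π * k * (K:ℕ) / K = k * π by field_simp]
    exact Real.sin_nat_mul_pi k
  have L1 := sum_sin_sq K k hK1 hk1 hkK
  have L2 := sum_sin_mul K k hK1 hk1 hkK
  have hKK : K - 1 + 1 = K := by omega
  have hcK : ((K-1 : ℕ):ℝ) + 1 = (K:ℝ) := by rw [← Nat.cast_add_one, hKK]
  have D1 : ∑ j ∈ Finset.range (K-1), Real.sin (π * k * ((j:ℝ)+1) / K) ^ 2 = K / 2 := by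
    have h := Finset.sum_range_succ' (fun j : ℕ => Real.sin (π * k * j / K) ^ 2) (K-1)
    rw [hKK] at h
    push_cast at h
    rw [L1] at h
    simpa using h.symm
  have D4 : ∑ j ∈ Finset.range K, Real.sin (π * k * ((j:ℝ)+1) / K) ^ 2 = K / 2 := by
    have h1 := Finset.sum_range_succ' (fun j : ℕ => Real.sin (π * k * j / K) ^ 2) K
    have h2 := Finset.sum_range_succ (fun j : ℕ => Real.sin (π * k * j / K) ^ 2) K
    rw [h2] at h1
    push_cast at h1
    rw [L1, hsK] at h1
    simpa using h1.symm
  have D2 : ∑ j ∈ Finset.range (K-1),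
      Real.sin (π * k * j / K) * Real.sin (π * k * ((j:ℝ)+1) / K)
        = K / 2 * Real.cos (π * k / K) := by
    have h := Finset.sum_range_succ
      (fun j : ℕ => Real.sin (π * k * j / K) * Real.sin (π * k * ((j:ℝ)+1) / K)) (K-1)
    rw [hKK, L2, hcK, hsK, mul_zero, add_zero] at h
    exact h.symm
  have D3 : ∑ j ∈ Finset.range (K-1),
      Real.sin (π * k * ((j:ℝ)+1) / K) * Real.sin (π * k * ((j:ℝ)+2) / K)
        = K / 2 * Real.cos (π * k / K) := by
    have h := Finset.sum_range_succ'
      (fun j : ℕ => Real.sin (π * k * j / K) * Real.sin (π * k * ((j:ℝ)+1) / K)) (K-1)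
    rw [hKK, L2] at h
    push_cast at h
    simp only [show ∀ x:ℝ, x+1+1 = x+2 from fun x => by ring] at h
    simpa using h.symm
  -- rewrite the sums over Icc as sums over range
  rw [show Finset.Icc 1 (K-1) = Finset.Ico 1 K from by
        rw [← Finset.Ico_add_one_right_eq_Icc, hKK],
    show Finset.Icc 1 K = Finset.Ico 1 (K+1) from (Finset.Ico_add_one_right_eq_Icc 1 K).symm,
    Finset.sum_Ico_eq_sum_range, Finset.sum_Ico_eq_sum_range, Nat.add_sub_cancel]
  have hNterm : ∀ i : ℕ,
      (cn * vnode (1 + i - 1) + flipVec c ⬝ᵥ velt (1 + i) + 2 * c0 * vnode (1 + i)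
        + c ⬝ᵥ velt (1 + i + 1) + cn * vnode (1 + i + 1)) * vnode (1 + i)
      = (cn + c ⬝ᵥ flipVec p)
          * (Real.sin (π * k * i / K) * Real.sin (π * k * ((i:ℝ)+1) / K))
        + (2 * c0 + 2 * (c ⬝ᵥ p)) * Real.sin (π * k * ((i:ℝ)+1) / K) ^ 2
        + (cn + c ⬝ᵥ flipVec p)
          * (Real.sin (π * k * ((i:ℝ)+1) / K) * Real.sin (π * k * ((i:ℝ)+2) / K)) := by
    intro i
    simp only [vnode, velt]
    rw [show 1 + i - 1 = i from by omega, show 1 + i + 1 - 1 = i + 1 from by omega,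
      show 1 + i + 1 = i + 2 from by omega, show 1 + i = i + 1 from by omega]
    push_cast
    exact nodal_term c0 cn _ _ _ c p
  have hEterm : ∀ i : ℕ,
      ((fun l => c l * vnode (1 + i - 1) + Ct.mulVec (velt (1 + i)) l
          + flipVec c l * vnode (1 + i)) ⬝ᵥ velt (1 + i))
      = (c ⬝ᵥ p + Ct.mulVec p ⬝ᵥ p) * Real.sin (π * k * i / K) ^ 2
        + (c ⬝ᵥ p + Ct.mulVec p ⬝ᵥ p) * Real.sin (π * k * ((i:ℝ)+1) / K) ^ 2
        + (2 * (c ⬝ᵥ flipVec p) + 2 * (Ct.mulVec p ⬝ᵥ flipVec p))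
          * (Real.sin (π * k * i / K) * Real.sin (π * k * ((i:ℝ)+1) / K)) := by
    intro i
    simp only [vnode, velt]
    rw [show 1 + i - 1 = i from by omega, show 1 + i = i + 1 from by omega]
    rw [mulVec_comb Ct p (flipVec p), hsym p]
    push_cast
    exact elt_term _ _ c p (Ct.mulVec p)
  rw [Finset.sum_congr rfl (fun i _ => hNterm i), Finset.sum_congr rfl (fun i _ => hEterm i)]
  simp only [Finset.sum_add_distrib, ← Finset.mul_sum]
  rw [D1, D2, D3, L1, D4, L2]
  have hb0 : b0 = c0 + ((Ct.mulVec p ⬝ᵥ p) + 2 * (c ⬝ᵥ p)) := by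
    simp only [b0]
    congr 1
    rw [show (fun i => Ct.mulVec p i + 2 * c i)
        = (fun i => Ct.mulVec p i + (fun l => 2 * c l) i) from rfl,
      fun_add_dot, smul_fun_dot]
  have hbn : bn = cn + ((Ct.mulVec p ⬝ᵥ flipVec p) + 2 * (c ⬝ᵥ flipVec p)) := by
    simp only [bn]
    congr 1
    rw [show (fun i => Ct.mulVec p i + 2 * c i)
        = (fun i => Ct.mulVec p i + (fun l => 2 * c l) i) from rfl,
      fun_add_dot, smul_fun_dot]
  rw [hb0, hbn]
  ring
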